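/- For every k ≥ 3, the Narayana polynomial M_k(t) = ∑_i (1/(k-2))·C(k-2,i)·C(k-2,i+1)·t^{2i} has integer coefficients, is palindromic of degree 2k-6 (i.e. t^{2k-6} M_k(1/t) = M_k(t)), and if k is even then (1+t^2) divides M_k(t). -/

import Mathlib

/-- Binomial coefficient with integer arguments, with the convention that
`binom n m = 0` when `m < 0` or `m > n`. -/
def binom (n m : ℤ) : ℤ := if 0 ≤ m ∧ m ≤ n then n.toNat.choose m.toNat else 0

open Polynomial

/-- The Narayana polynomial `M_k(t) = ∑_i (1/(k-2)) C(k-2,i) C(k-2,i+1) t^{2i}` over ℚ. -/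
noncomputable def Mk (k : ℕ) : Polynomial ℚ :=
  ∑ i ∈ Finset.range (k - 2),
    Polynomial.C ((1 / ((k : ℚ) - 2)) * (binom ((k : ℤ) - 2) (i : ℤ) : ℚ) *
        (binom ((k : ℤ) - 2) ((i : ℤ) + 1) : ℚ)) *
      X ^ (2 * i)

lemma binom_natCast (n m : ℕ) : binom (n : ℤ) (m : ℤ) = (n.choose m : ℤ) := by
  unfold binom
  rcases le_or_gt m n with h | h
  · rw [if_pos ⟨Int.natCast_nonneg m, by exact_mod_cast h⟩]
    simp
  · rw [if_neg (fun ⟨_, hb⟩ => absurd (by exact_mod_cast hb : m ≤ n) (not_le.2 h)),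
      Nat.choose_eq_zero_of_lt h]
    simp

lemma choose_cast_mul (N i : ℕ) (hN : 1 ≤ N) :
    (N : ℚ) * ((N - 1).choose i : ℚ) = ((N : ℚ) - i) * (N.choose i : ℚ) := by
  rcases le_or_gt i N with h | h
  · have h1 : (N - 1).choose i * ((N - 1) + 1) = ((N - 1) + 1).choose i * ((N - 1) + 1 - i) :=
      Nat.choose_mul_succ_eq (N - 1) i
    have h2 : N - 1 + 1 = N := Nat.succ_pred_eq_of_pos hN
    rw [h2] at h1
    have h3 : (((N - 1).choose i * N : ℕ) : ℚ) = ((N.choose i * (N - i) : ℕ) : ℚ) := by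
      rw [h1]
    push_cast [Nat.cast_sub h] at h3
    linear_combination h3
  · rw [Nat.choose_eq_zero_of_lt h, Nat.choose_eq_zero_of_lt (by omega)]
    simp

lemma narayana_eq (N i : ℕ) (hN : 1 ≤ N) :
    (1 / (N : ℚ)) * (N.choose i : ℚ) * (N.choose (i + 1) : ℚ)
      = (((((N - 1).choose i : ℤ) * (N.choose (i + 1) : ℤ)
          - (N.choose i : ℤ) * (((N - 1).choose (i + 1) : ℤ))) : ℤ) : ℚ) := by
  have hN0 : (N : ℚ) ≠ 0 := by
    exact Nat.cast_ne_zero.mpr (by omega)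
  have h1 := choose_cast_mul N i hN
  have h2 := choose_cast_mul N (i + 1) hN
  push_cast at h2 ⊢
  field_simp
  linear_combination (N.choose i : ℚ) * h2 - (N.choose (i + 1) : ℚ) * h1

lemma reflect_sum {s : Finset ℕ} (N : ℕ) (f : ℕ → Polynomial ℚ) :
    Polynomial.reflect N (∑ i ∈ s, f i) = ∑ i ∈ s, Polynomial.reflect N (f i) := by
  classical
  induction s using Finset.induction with
  | empty => simp
  | insert a t h ih =>
    rw [Finset.sum_insert h, Finset.sum_insert h, Polynomial.reflect_add, ih]

/-- For `k ≥ 3`, `M_k` has integer coefficients, is palindromic of degree `2k-6`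
(i.e. `t^{2k-6} M_k(1/t) = M_k(t)`), and `(1+t^2) ∣ M_k` when `k` is even. -/
theorem stmt_18 (k : ℕ) (hk : 3 ≤ k) :
    (∀ n : ℕ, ∃ z : ℤ, (Mk k).coeff n = (z : ℚ)) ∧
    Polynomial.reflect (2 * k - 6) (Mk k) = Mk k ∧
    (Even k → (1 + X ^ 2 : Polynomial ℚ) ∣ Mk k) := by
  set n : ℕ := k - 2 with hn
  have hn1 : 1 ≤ n := by omega
  set z : ℕ → ℤ :=
    fun i => ((n - 1).choose i : ℤ) * (n.choose (i + 1) : ℤ)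
      - (n.choose i : ℤ) * ((n - 1).choose (i + 1) : ℤ) with hz
  have hzq : ∀ i, (z i : ℚ) = (1 / (n : ℚ)) * (n.choose i : ℚ) * (n.choose (i + 1) : ℚ) := by
    intro i
    rw [hz]
    exact (narayana_eq n i hn1).symm
  have hcast : ((k : ℚ) - 2) = (n : ℚ) := by
    rw [hn, Nat.cast_sub (by omega)]
    norm_num
  have hbin : ∀ m : ℕ, binom ((k : ℤ) - 2) (m : ℤ) = (n.choose m : ℤ) := by
    intro m
    have h : (k : ℤ) - 2 = (n : ℤ) := by rw [hn]; push_cast [Nat.cast_sub (by omega : 2 ≤ k)]; ring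
    rw [h, binom_natCast]
  have hMk : Mk k = ∑ i ∈ Finset.range n, C ((z i : ℚ)) * X ^ (2 * i) := by
    unfold Mk
    refine Finset.sum_congr rfl fun i _ => ?_
    congr 1
    have h1 := hbin i
    have h2 : binom ((k : ℤ) - 2) ((i : ℤ) + 1) = (n.choose (i + 1) : ℤ) := by
      have : ((i : ℤ) + 1) = ((i + 1 : ℕ) : ℤ) := by push_cast; ring
      rw [this, hbin]
    rw [h1, h2, hcast, hzq i]
    push_cast
    ring
  have hzsym : ∀ i < n, (z (n - 1 - i) : ℚ) = (z i : ℚ) := by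
    intro i hi
    rw [hzq, hzq]
    rw [show n.choose (n - 1 - i) = n.choose (i + 1) by
        rw [show n - 1 - i = n - (i + 1) by omega, Nat.choose_symm (by omega)],
      show n.choose (n - 1 - i + 1) = n.choose i by
        rw [show n - 1 - i + 1 = n - i by omega, Nat.choose_symm (by omega)]]
    ring
  refine ⟨?_, ?_, ?_⟩
  · -- integrality
    intro m
    refine ⟨∑ i ∈ Finset.range n, if m = 2 * i then z i else 0, ?_⟩
    rw [hMk, Polynomial.finset_sum_coeff]
    push_cast
    refine Finset.sum_congr rfl fun i _ => ?_
    rw [Polynomial.coeff_C_mul, Polynomial.coeff_X_pow]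
    by_cases h : m = 2 * i
    · simp [h]
    · rw [if_neg h, if_neg h]
      simp
  · -- palindromic
    have h26 : 2 * k - 6 = 2 * (n - 1) := by omega
    rw [hMk, h26]
    have hrefl : reflect (2 * (n - 1)) (∑ i ∈ Finset.range n, C ((z i : ℚ)) * X ^ (2 * i))
        = ∑ i ∈ Finset.range n, C ((z i : ℚ)) * X ^ (revAt (2 * (n - 1)) (2 * i)) := by
      rw [reflect_sum]
      exact Finset.sum_congr rfl fun i _ => reflect_C_mul_X_pow _ _
    rw [hrefl]
    have step1 : ∑ i ∈ Finset.range n, C ((z i : ℚ)) * X ^ (revAt (2 * (n - 1)) (2 * i))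
        = ∑ i ∈ Finset.range n,
            (fun j => C ((z (n - 1 - j) : ℚ)) * X ^ (2 * j)) (n - 1 - i) := by
      refine Finset.sum_congr rfl fun i hi => ?_
      have hi' : i < n := Finset.mem_range.mp hi
      simp only []
      rw [show n - 1 - (n - 1 - i) = i by omega,
        Polynomial.revAt_le (by omega : 2 * i ≤ 2 * (n - 1)),
        show 2 * (n - 1) - 2 * i = 2 * (n - 1 - i) by omega]
    have step2 := Finset.sum_range_reflect (fun j => C ((z (n - 1 - j) : ℚ)) * X ^ (2 * j)) n
    rw [step1, step2]
    refine Finset.sum_congr rfl fun i hi => ?_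
    show C ((z (n - 1 - i) : ℚ)) * X ^ (2 * i) = C ((z i : ℚ)) * X ^ (2 * i)
    rw [hzsym i (Finset.mem_range.mp hi)]
  · -- divisibility
    intro hke
    have hnev : Even n := by
      rcases hke with ⟨m, hm⟩
      exact ⟨m - 1, by omega⟩
    have hodd : Odd (n - 1) := by
      rcases hnev with ⟨m, hm⟩
      exact ⟨m - 1, by omega⟩
    set P : Polynomial ℚ := ∑ i ∈ Finset.range n, C ((z i : ℚ)) * X ^ i with hP
    have hcomp : P.comp (X ^ 2) = Mk k := by
      rw [hMk, hP, Polynomial.sum_comp]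
      refine Finset.sum_congr rfl fun i _ => ?_
      rw [Polynomial.mul_comp, Polynomial.C_comp, Polynomial.pow_comp, Polynomial.X_comp,
        ← pow_mul]
    have hroot : IsRoot P (-1) := by
      have hkey : ∀ i < n, (-1 : ℚ) ^ (n - 1 - i) = -(-1 : ℚ) ^ i := by
        intro i hi
        have h1 : (-1 : ℚ) ^ (n - 1 - i) * ((-1 : ℚ) ^ i * (-1 : ℚ) ^ i)
            = (-1 : ℚ) ^ (n - 1) * (-1 : ℚ) ^ i := by
          rw [← mul_assoc, ← pow_add, show n - 1 - i + i = n - 1 by omega]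
        have h2 : (-1 : ℚ) ^ i * (-1 : ℚ) ^ i = 1 := by
          rw [← pow_add, ← two_mul, pow_mul]
          norm_num
        have h3 : (-1 : ℚ) ^ (n - 1) = -1 := Odd.neg_one_pow hodd
        rw [h2, h3] at h1
        linarith [h1]
      have hsum : ∑ i ∈ Finset.range n, (z i : ℚ) * (-1 : ℚ) ^ i = 0 := by
        set S := ∑ i ∈ Finset.range n, (z i : ℚ) * (-1 : ℚ) ^ i with hS
        have hSS : S = -S := by
          conv_lhs => rw [hS, ← Finset.sum_range_reflect]
          rw [hS, ← Finset.sum_neg_distrib]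
          refine Finset.sum_congr rfl fun i hi => ?_
          have hi' : i < n := Finset.mem_range.mp hi
          rw [hzsym i hi', hkey i hi']
          ring
        linarith [hSS]
      have : P.eval (-1) = ∑ i ∈ Finset.range n, (z i : ℚ) * (-1 : ℚ) ^ i := by
        rw [hP, Polynomial.eval_finset_sum]
        exact Finset.sum_congr rfl fun i _ => by
          rw [Polynomial.eval_mul, Polynomial.eval_C, Polynomial.eval_pow, Polynomial.eval_X]
      rw [IsRoot, this, hsum]
    obtain ⟨q, hq⟩ := Polynomial.dvd_iff_isRoot.mpr hroot
    refine ⟨q.comp (X ^ 2), ?_⟩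
    have : (X - C (-1) : Polynomial ℚ) = X + 1 := by
      rw [map_neg, C_1]
      ring
    rw [this] at hq
    rw [← hcomp, hq, Polynomial.mul_comp, Polynomial.add_comp, Polynomial.X_comp,
      Polynomial.one_comp]
    ring
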